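/- Let G be a finite abelian group and A a finite set of size q ≥ 2. The group ICA(G;A) of invertible cellular automata is isomorphic to the direct product over all subgroups H_i ≤ G of the wreath products (G/H_i) ≀ Sym(α_i), where α_i is the number of G-orbits on A^G whose point stabiliser is H_i. -/

import Mathlib

/-- The right action of `G` on configurations `A^G`: `(x · g) h = x (h g⁻¹)`. -/
def confMul {G A : Type*} [Group G] (x : G → A) (g : G) : G → A := fun h => x (h * g⁻¹)

/-- The `G`-orbit of a configuration `x ∈ A^G`. -/
def orbitOf {G A : Type*} [Group G] (x : G → A) : Set (G → A) := {y | ∃ g : G, y = confMul x g}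

/-- The group `ICA(G;A)` of invertible cellular automata: bijective `G`-equivariant
transformations of `A^G`, as a subgroup of `Sym(A^G)`. -/
def ICA (G A : Type*) [Group G] : Subgroup (Equiv.Perm (G → A)) where
  carrier := {e | ∀ x g, e (confMul x g) = confMul (e x) g}
  one_mem' := fun _ _ => rfl
  mul_mem' := by
    intro a b ha hb x g
    rw [Equiv.Perm.mul_apply, Equiv.Perm.mul_apply, hb x g, ha (b x) g]
  inv_mem' := by
    intro a ha x g
    apply a.injective
    rw [ha (a⁻¹ x) g]
    simp

/-- Permutations of coordinates as automorphisms of `Fin k → C`. -/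
def permHom (C : Type*) [Group C] (k : ℕ) : Equiv.Perm (Fin k) →* MulAut (Fin k → C) where
  toFun σ :=
    { toFun := fun v i => v (σ⁻¹ i)
      invFun := fun v i => v (σ i)
      left_inv := fun v => funext fun i => by simp
      right_inv := fun v => funext fun i => by simp
      map_mul' := fun v w => rfl }
  map_one' := by ext v i; simp
  map_mul' := by intro σ τ; ext v i; simp

/-- The wreath product `C ≀ Sym_k = C^k ⋊ Sym_k`. -/
abbrev wreath (C : Type*) [Group C] (k : ℕ) :=
  SemidirectProduct (Fin k → C) (Equiv.Perm (Fin k)) (permHom C k)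

/-- `α_H`: the number of `G`-orbits on `A^G` consisting of configurations with
stabiliser exactly `H`. -/
noncomputable def alphaH (G A : Type*) [Group G] (H : Subgroup G) : ℕ :=
  Nat.card {O : Set (G → A) | ∃ x : G → A,
    (∀ g : G, confMul x g = x ↔ g ∈ H) ∧ O = orbitOf x}

section A


section Conf
variable {G A : Type*} [Group G]

lemma confMul_one (x : G → A) : confMul x 1 = x := by
  funext h; simp [confMul]

lemma confMul_mul (x : G → A) (a b : G) :
    confMul x (a * b) = confMul (confMul x a) b := by
  funext h; simp [confMul, mul_assoc]

lemma confMul_cancel (x : G → A) (a : G) : confMul (confMul x a) a⁻¹ = x := by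
  rw [← confMul_mul]; simp [confMul_one]

/-- The stabiliser of a configuration. -/
def cstab (x : G → A) : Subgroup G where
  carrier := {g | confMul x g = x}
  one_mem' := confMul_one x
  mul_mem' := by
    intro a b ha hb
    show confMul x (a * b) = x
    rw [confMul_mul, ha, hb]
  inv_mem' := by
    intro a ha
    show confMul x a⁻¹ = x
    conv_lhs => rw [← ha]
    exact confMul_cancel x a

lemma mem_cstab {x : G → A} {g : G} : g ∈ cstab x ↔ confMul x g = x := Iff.rfl

lemma orbitOf_confMul (x : G → A) (g : G) : orbitOf (confMul x g) = orbitOf x := by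
  ext y
  constructor
  · rintro ⟨k, rfl⟩; exact ⟨g * k, by rw [confMul_mul]⟩
  · rintro ⟨k, rfl⟩
    exact ⟨g⁻¹ * k, by rw [confMul_mul, confMul_cancel]⟩

lemma self_mem_orbitOf (x : G → A) : x ∈ orbitOf x := ⟨1, (confMul_one x).symm⟩

end Conf

section CommConf
variable {G A : Type*} [CommGroup G]

lemma cstab_confMul (x : G → A) (g : G) : cstab (confMul x g) = cstab x := by
  ext k
  simp only [mem_cstab]
  rw [← confMul_mul, mul_comm, confMul_mul]
  constructor
  · intro h
    have := congrArg (fun y => confMul y g⁻¹) h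
    simpa [confMul_cancel] using this
  · intro h; rw [h]

end CommConf

/-- Equivariant permutations w.r.t. an action given as a hom into the permutation group. -/
def ePerm {G X : Type*} [Group G] (ρ : G →* Equiv.Perm X) : Subgroup (Equiv.Perm X) :=
  Subgroup.centralizer (Set.range ρ)

lemma mem_ePerm {G X : Type*} [Group G] {ρ : G →* Equiv.Perm X} {e : Equiv.Perm X} :
    e ∈ ePerm ρ ↔ ∀ (g : G) (x : X), e (ρ g x) = ρ g (e x) := by
  rw [ePerm, Subgroup.mem_centralizer_iff]
  constructor
  · rintro h g x
    have := h (ρ g) ⟨g, rfl⟩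
    have := congrFun (congrArg (fun p => (p : Equiv.Perm X).toFun) this.symm) x
    simpa using this
  · rintro h p ⟨g, rfl⟩
    ext x
    exact (h g x).symm

/-- Transport equivariant permutation groups along a compatible equivalence. -/
def ePermCongr {G X Y : Type*} [Group G] {ρ : G →* Equiv.Perm X} {ρ' : G →* Equiv.Perm Y}
    (f : X ≃ Y) (hf : ∀ g x, f (ρ g x) = ρ' g (f x)) : ePerm ρ ≃* ePerm ρ' where
  toFun e := ⟨(f.symm.trans e.1).trans f, by
    rw [mem_ePerm]
    intro g y
    have h1 : f.symm (ρ' g y) = ρ g (f.symm y) := by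
      apply f.injective
      rw [hf]
      simp
    simp only [Equiv.trans_apply, h1, mem_ePerm.1 e.2 g, hf]⟩
  invFun e := ⟨(f.trans e.1).trans f.symm, by
    rw [mem_ePerm]
    intro g x
    have h1 : ∀ y, f.symm (ρ' g y) = ρ g (f.symm y) := by
      intro y
      apply f.injective
      rw [hf]
      simp
    simp only [Equiv.trans_apply, hf g x, mem_ePerm.1 e.2 g, h1]⟩
  left_inv e := by ext x; simp
  right_inv e := by ext y; simp
  map_mul' a b := by ext y; simp



section Decomp
variable (G A : Type*) [CommGroup G]

/-- The shift action as a homomorphism into the permutation group. -/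
def rho0 : G →* Equiv.Perm (G → A) where
  toFun g :=
    { toFun := fun x => confMul x g
      invFun := fun x => confMul x g⁻¹
      left_inv := fun x => by
        show confMul (confMul x g) g⁻¹ = x
        rw [← confMul_mul]; simp [confMul_one]
      right_inv := fun x => by
        show confMul (confMul x g⁻¹) g = x
        rw [← confMul_mul]; simp [confMul_one] }
  map_one' := by
    apply Equiv.ext
    intro x
    exact confMul_one x
  map_mul' := by
    intro g h
    apply Equiv.ext
    intro x
    show confMul x (g * h) = confMul (confMul x h) g
    rw [← confMul_mul, mul_comm]

@[simp] lemma rho0_apply (g : G) (x : G → A) : rho0 G A g x = confMul x g := rfl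

lemma ICA_eq_ePerm : ICA G A = ePerm (rho0 G A) := by
  ext e
  rw [mem_ePerm]
  constructor
  · intro h g x; exact h x g
  · intro h x g; exact h g x

/-- Configurations with stabiliser exactly `H`. -/
def XH (H : Subgroup G) : Type _ := {x : G → A // cstab x = H}

/-- The shift action restricted to `XH`. -/
def rhoH (H : Subgroup G) : G →* Equiv.Perm (XH G A H) where
  toFun g := Equiv.Perm.subtypePerm (rho0 G A g)
    (fun x => by rw [show (rho0 G A g) x = confMul x g from rfl, cstab_confMul])
  map_one' := by
    apply Equiv.ext
    intro x
    apply Subtype.ext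
    show confMul x.1 1 = x.1
    exact confMul_one x.1
  map_mul' := by
    intro g h
    apply Equiv.ext
    intro x
    apply Subtype.ext
    show confMul x.1 (g * h) = confMul (confMul x.1 h) g
    rw [← confMul_mul, mul_comm]

@[simp] lemma rhoH_apply_coe (H : Subgroup G) (g : G) (x : XH G A H) :
    (rhoH G A H g x).1 = confMul x.1 g := rfl

variable {G A}

lemma cstab_of_ePerm {e : Equiv.Perm (G → A)} (he : e ∈ ePerm (rho0 G A)) (x : G → A) :
    cstab (e x) = cstab x := by
  ext g
  simp only [mem_cstab]
  constructor
  · intro h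
    apply e.injective
    rw [show e (confMul x g) = confMul (e x) g from mem_ePerm.1 he g x, h]
  · intro h
    rw [show confMul (e x) g = e (confMul x g) from (mem_ePerm.1 he g x).symm, h]

variable (G A)

/-- Restrict an equivariant permutation to each stabiliser fibre. -/
def restrictHom : ePerm (rho0 G A) →* (∀ H : Subgroup G, ePerm (rhoH G A H)) where
  toFun e := fun H =>
    ⟨Equiv.Perm.subtypePerm e.1 (fun x => by rw [cstab_of_ePerm e.2 x]), by
      apply mem_ePerm.2
      intro g x
      apply Subtype.ext
      exact mem_ePerm.1 e.2 g x.1⟩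
  map_one' := by funext H; apply Subtype.ext; ext x; rfl
  map_mul' := by intro a b; funext H; apply Subtype.ext; ext x; rfl

variable {G A}

def glueFun (u : ∀ H : Subgroup G, ePerm (rhoH G A H)) (x : G → A) : G → A :=
  ((u (cstab x)).1 ⟨x, rfl⟩).1

lemma glueFun_spec (u : ∀ H : Subgroup G, ePerm (rhoH G A H)) {x : G → A} {H : Subgroup G}
    (hx : cstab x = H) : glueFun u x = ((u H).1 ⟨x, hx⟩).1 := by
  subst hx; rfl

lemma cstab_glueFun (u : ∀ H : Subgroup G, ePerm (rhoH G A H)) (x : G → A) :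
    cstab (glueFun u x) = cstab x :=
  ((u (cstab x)).1 ⟨x, rfl⟩).2

lemma glue_left_inv (u : ∀ H : Subgroup G, ePerm (rhoH G A H)) (x : G → A) :
    glueFun (fun H => (u H)⁻¹) (glueFun u x) = x := by
  have h : cstab (glueFun u x) = cstab x := cstab_glueFun u x
  rw [glueFun_spec _ h]
  have : (⟨glueFun u x, h⟩ : XH G A (cstab x)) = (u (cstab x)).1 ⟨x, rfl⟩ :=
    Subtype.ext rfl
  rw [this]
  have hco : (((u (cstab x))⁻¹ : ePerm (rhoH G A (cstab x))) : Equiv.Perm (XH G A (cstab x)))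
      = ((u (cstab x) : Equiv.Perm (XH G A (cstab x))))⁻¹ := rfl
  rw [hco]
  simp
  exact congrArg Subtype.val (Equiv.symm_apply_apply _ _)

/-- Glue a family of fibrewise equivariant permutations into one permutation. -/
def glueEquiv (u : ∀ H : Subgroup G, ePerm (rhoH G A H)) : Equiv.Perm (G → A) where
  toFun := glueFun u
  invFun := glueFun (fun H => (u H)⁻¹)
  left_inv := glue_left_inv u
  right_inv := fun x => by
    have := glue_left_inv (fun H => (u H)⁻¹) x
    simpa using this

lemma glueEquiv_mem (u : ∀ H : Subgroup G, ePerm (rhoH G A H)) :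
    glueEquiv u ∈ ePerm (rho0 G A) := by
  rw [mem_ePerm]
  intro g x
  show glueFun u (confMul x g) = confMul (glueFun u x) g
  have h : cstab (confMul x g) = cstab x := cstab_confMul x g
  rw [glueFun_spec u h]
  have : (⟨confMul x g, h⟩ : XH G A (cstab x)) = rhoH G A (cstab x) g ⟨x, rfl⟩ :=
    Subtype.ext rfl
  rw [this, mem_ePerm.1 (u (cstab x)).2 g ⟨x, rfl⟩]
  rfl

variable (G A)

lemma restrictHom_bijective : Function.Bijective (restrictHom G A) := by
  constructor
  · intro e e' h
    apply Subtype.ext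
    apply Equiv.ext
    intro x
    have := congrArg (fun u => (((u (cstab x)) : Equiv.Perm (XH G A (cstab x))) ⟨x, rfl⟩).1) h
    exact this
  · intro u
    refine ⟨⟨glueEquiv u, glueEquiv_mem u⟩, ?_⟩
    funext H
    apply Subtype.ext
    apply Equiv.ext
    intro x
    apply Subtype.ext
    show glueFun u x.1 = ((u H).1 x).1
    rw [glueFun_spec u x.2]
    exact congrArg (fun y => ((u H).1 y).1) (Subtype.ext rfl)

noncomputable def decompEquiv : ePerm (rho0 G A) ≃* (∀ H : Subgroup G, ePerm (rhoH G A H)) :=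
  MulEquiv.ofBijective (restrictHom G A) (restrictHom_bijective G A)

end Decomp

section WreathCore
variable {G : Type*} [Group G] {Q : Type*} [CommGroup Q] (k : ℕ) (φ : G →* Q)

/-- The action of `G` on `Fin k × Q` through `φ`, trivial on the first factor. -/
def rhoProd : G →* Equiv.Perm (Fin k × Q) where
  toFun g :=
    { toFun := fun p => (p.1, φ g * p.2)
      invFun := fun p => (p.1, (φ g)⁻¹ * p.2)
      left_inv := fun p => by simp
      right_inv := fun p => by simp }
  map_one' := by
    apply Equiv.ext
    intro p
    show (p.1, φ 1 * p.2) = p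
    simp
  map_mul' := by
    intro g h
    apply Equiv.ext
    intro p
    show (p.1, φ (g * h) * p.2) = (p.1, φ g * (φ h * p.2))
    simp [mul_assoc]

@[simp] lemma rhoProd_apply (g : G) (p : Fin k × Q) :
    rhoProd k φ g p = (p.1, φ g * p.2) := rfl

/-- A wreath product element acts on `Fin k × Q`. -/
def wreathToEPerm : wreath Q k →* ePerm (rhoProd k φ) where
  toFun w :=
    ⟨{ toFun := fun p => (w.right p.1, w.left (w.right p.1) * p.2)
       invFun := fun p => (w.right⁻¹ p.1, (w.left p.1)⁻¹ * p.2)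
       left_inv := fun p => by simp
       right_inv := fun p => by simp }, by
      rw [mem_ePerm]
      intro g p
      show ((w.right p.1 : Fin k), w.left (w.right p.1) * (φ g * p.2))
        = (w.right p.1, φ g * (w.left (w.right p.1) * p.2))
      rw [mul_left_comm]⟩
  map_one' := by
    apply Subtype.ext
    apply Equiv.ext
    intro p
    show (((1 : wreath Q k).right p.1 : Fin k), (1 : wreath Q k).left _ * p.2) = p
    simp
  map_mul' := by
    intro a b
    apply Subtype.ext
    apply Equiv.ext
    intro p
    show (((a * b).right p.1 : Fin k), (a * b).left ((a * b).right p.1) * p.2)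
      = (a.right (b.right p.1), a.left (a.right (b.right p.1)) * (b.left (b.right p.1) * p.2))
    simp only [SemidirectProduct.mul_right, SemidirectProduct.mul_left, Equiv.Perm.mul_apply,
      Pi.mul_apply, permHom]
    refine Prod.ext rfl ?_
    show a.left (a.right (b.right p.1)) * b.left (a.right⁻¹ (a.right (b.right p.1))) * p.2 = _
    rw [Equiv.Perm.inv_def, Equiv.symm_apply_apply, mul_assoc]

lemma wreathToEPerm_injective : Function.Injective (wreathToEPerm k φ) := by
  intro w w' h
  have key : ∀ i : Fin k, ((w.right i : Fin k), w.left (w.right i) * (1 : Q))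
      = (w'.right i, w'.left (w'.right i) * 1) := by
    intro i
    exact congrFun (congrArg (fun e => ((e : ePerm (rhoProd k φ)) : Equiv.Perm (Fin k × Q)).toFun) h) (i, 1)
  have hr : w.right = w'.right := by
    apply Equiv.ext
    intro i
    exact (Prod.ext_iff.1 (key i)).1
  have hl : w.left = w'.left := by
    funext j
    obtain ⟨i, rfl⟩ : ∃ i, w'.right i = j := ⟨w'.right⁻¹ j, w'.right.apply_symm_apply j⟩
    have h2 := (Prod.ext_iff.1 (key i)).2
    rw [hr] at h2
    simpa using h2
  cases w; cases w'
  simp_all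

lemma wreathToEPerm_surjective (hφ : Function.Surjective φ) :
    Function.Surjective (wreathToEPerm k φ) := by
  rintro ⟨e, he⟩
  have key : ∀ (c : Q) (i : Fin k) (q : Q), e (i, c * q) = ((e (i, q)).1, c * (e (i, q)).2) := by
    intro c i q
    obtain ⟨g, rfl⟩ := hφ c
    have := mem_ePerm.1 he g (i, q)
    simpa using this
  have keyinv : ∀ (c : Q) (i : Fin k) (q : Q),
      e⁻¹ (i, c * q) = ((e⁻¹ (i, q)).1, c * (e⁻¹ (i, q)).2) := by
    intro c i q
    obtain ⟨g, rfl⟩ := hφ c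
    have := mem_ePerm.1 ((ePerm (rhoProd k φ)).inv_mem he) g (i, q)
    simpa using this
  set σ₀ : Fin k → Fin k := fun i => (e (i, 1)).1 with hσ₀
  set v₀ : Fin k → Q := fun i => (e (i, 1)).2 with hv₀
  set τ₀ : Fin k → Fin k := fun i => (e⁻¹ (i, 1)).1 with hτ₀
  have e_apply : ∀ i q, e (i, q) = (σ₀ i, v₀ i * q) := by
    intro i q
    have := key q i 1
    rw [mul_one] at this
    exact this.trans (by rw [mul_comm])
  have einv_apply : ∀ i q, e⁻¹ (i, q) = (τ₀ i, (e⁻¹ (i, 1)).2 * q) := by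
    intro i q
    have := keyinv q i 1
    rw [mul_one] at this
    exact this.trans (by rw [mul_comm])
  have hτσ : ∀ i, τ₀ (σ₀ i) = i := by
    intro i
    have h1 : e⁻¹ (e (i, 1)) = (i, 1) := e.symm_apply_apply _
    rw [e_apply i 1, mul_one, einv_apply (σ₀ i) (v₀ i)] at h1
    exact (Prod.ext_iff.1 h1).1
  have hστ : ∀ i, σ₀ (τ₀ i) = i := by
    intro i
    have h1 : e (e⁻¹ (i, 1)) = (i, 1) := e.apply_symm_apply _
    rw [einv_apply i 1, mul_one, e_apply (τ₀ i)] at h1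
    exact (Prod.ext_iff.1 h1).1
  refine ⟨⟨fun j => v₀ (τ₀ j), ⟨σ₀, τ₀, fun i => hτσ i, fun i => hστ i⟩⟩, ?_⟩
  apply Subtype.ext
  apply Equiv.ext
  intro p
  show (σ₀ p.1, v₀ (τ₀ (σ₀ p.1)) * p.2) = e p
  rw [hτσ, e_apply p.1 p.2]

/-- The wreath product as the group of equivariant permutations of `Fin k × Q`. -/
noncomputable def wreathMulEquiv (hφ : Function.Surjective φ) :
    ePerm (rhoProd k φ) ≃* wreath Q k :=
  (MulEquiv.ofBijective (wreathToEPerm k φ)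
    ⟨wreathToEPerm_injective k φ, wreathToEPerm_surjective k φ hφ⟩).symm

end WreathCore

section PerH
variable {G A : Type*} [CommGroup G] (H : Subgroup G)

/-- The set of orbits with stabiliser exactly `H`. -/
def SOrb (G A : Type*) [Group G] (H : Subgroup G) : Set (Set (G → A)) :=
  {O : Set (G → A) | ∃ x : G → A, (∀ g : G, confMul x g = x ↔ g ∈ H) ∧ O = orbitOf x}

variable {H}

noncomputable def xRep (O : SOrb G A H) : G → A := Classical.choose O.2

lemma xRep_stab (O : SOrb G A H) : cstab (xRep O) = H := by
  ext g
  exact (Classical.choose_spec O.2).1 g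

lemma xRep_orbit (O : SOrb G A H) : O.1 = orbitOf (xRep O) :=
  (Classical.choose_spec O.2).2

/-- The parametrisation of the stabiliser-`H` fibre by orbits and the quotient group. -/
noncomputable def TMap (p : SOrb G A H × (G ⧸ H)) : XH G A H :=
  Quotient.liftOn' p.2
    (fun g => (⟨confMul (xRep p.1) g, by rw [cstab_confMul, xRep_stab]⟩ : XH G A H))
    (by
      intro a b hab
      have hab' : a⁻¹ * b ∈ H := QuotientGroup.leftRel_apply.1 hab
      apply Subtype.ext
      show confMul (xRep p.1) a = confMul (xRep p.1) b
      have : confMul (xRep p.1) (a⁻¹ * b) = xRep p.1 := by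
        rw [← mem_cstab, xRep_stab]; exact hab'
      calc confMul (xRep p.1) a
          = confMul (confMul (xRep p.1) (a⁻¹ * b)) a := by rw [this]
        _ = confMul (xRep p.1) ((a⁻¹ * b) * a) := (confMul_mul _ _ _).symm
        _ = confMul (xRep p.1) (a * (a⁻¹ * b)) := by rw [mul_comm]
        _ = confMul (xRep p.1) b := by rw [mul_inv_cancel_left])

lemma TMap_mk (O : SOrb G A H) (g : G) :
    TMap (O, (g : G ⧸ H)) = ⟨confMul (xRep O) g, by rw [cstab_confMul, xRep_stab]⟩ := rfl

lemma TMap_equivariant (g : G) (p : SOrb G A H × (G ⧸ H)) :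
    TMap (p.1, (QuotientGroup.mk' H g) * p.2) = rhoH G A H g (TMap p) := by
  obtain ⟨O, q⟩ := p
  induction q using QuotientGroup.induction_on with
  | H g' =>
    show TMap (O, ((g * g' : G) : G ⧸ H)) = _
    rw [TMap_mk]
    apply Subtype.ext
    show confMul (xRep O) (g * g') = confMul (confMul (xRep O) g') g
    rw [← confMul_mul, mul_comm]

lemma TMap_bijective : Function.Bijective (TMap (G := G) (A := A) (H := H)) := by
  constructor
  · rintro ⟨O, q⟩ ⟨O', q'⟩ h
    induction q using QuotientGroup.induction_on with
    | H g =>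
      induction q' using QuotientGroup.induction_on with
      | H g' =>
        rw [TMap_mk, TMap_mk] at h
        have h1 : confMul (xRep O) g = confMul (xRep O') g' := congrArg Subtype.val h
        have hO : O = O' := by
          apply Subtype.ext
          rw [xRep_orbit O, xRep_orbit O', ← orbitOf_confMul (xRep O) g,
            ← orbitOf_confMul (xRep O') g', h1]
        subst hO
        have h2 : confMul (xRep O) (g * g'⁻¹) = xRep O := by
          rw [confMul_mul, h1, confMul_cancel]
        have h3 : g⁻¹ * g' ∈ H := by
          rw [← xRep_stab O]
          have : g * g'⁻¹ ∈ cstab (xRep O) := h2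
          have h4 := (cstab (xRep O)).inv_mem this
          simpa [mul_comm] using h4
        exact Prod.ext rfl (QuotientGroup.eq.2 h3)
  · rintro ⟨x, hx⟩
    have hOmem : orbitOf x ∈ SOrb G A H :=
      ⟨x, fun g => by rw [← hx]; exact Iff.rfl, rfl⟩
    set O : SOrb G A H := ⟨orbitOf x, hOmem⟩ with hO
    have hxO : x ∈ orbitOf (xRep O) := by
      rw [← xRep_orbit O]
      exact self_mem_orbitOf x
    obtain ⟨g, hg⟩ := hxO
    exact ⟨(O, (g : G ⧸ H)), by rw [TMap_mk]; exact Subtype.ext hg.symm⟩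

variable [Fintype G] [Fintype A] (H)

/-- `ICA` restricted to the stabiliser-`H` fibre is the wreath product. -/
noncomputable def perHEquiv : ePerm (rhoH G A H) ≃* wreath (G ⧸ H) (alphaH G A H) := by
  have : Finite (G → A) := inferInstance
  have hcard : alphaH G A H = Nat.card (SOrb G A H) := rfl
  let eS : SOrb G A H ≃ Fin (alphaH G A H) := by
    rw [hcard]; exact Finite.equivFin _
  let TEquiv : SOrb G A H × (G ⧸ H) ≃ XH G A H := Equiv.ofBijective _ TMap_bijective
  let f : Fin (alphaH G A H) × (G ⧸ H) ≃ XH G A H :=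
    (Equiv.prodCongr eS.symm (Equiv.refl _)).trans TEquiv
  have hf : ∀ (g : G) (p : Fin (alphaH G A H) × (G ⧸ H)),
      f (rhoProd (alphaH G A H) (QuotientGroup.mk' H) g p) = rhoH G A H g (f p) := by
    intro g p
    show TEquiv (eS.symm p.1, (QuotientGroup.mk' H g) * p.2) = rhoH G A H g (TEquiv (eS.symm p.1, p.2))
    show TMap (eS.symm p.1, (QuotientGroup.mk' H g) * p.2) = rhoH G A H g (TMap (eS.symm p.1, p.2))
    exact TMap_equivariant g (eS.symm p.1, p.2)
  exact (ePermCongr f hf).symm.trans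
    (wreathMulEquiv (alphaH G A H) (QuotientGroup.mk' H) (QuotientGroup.mk'_surjective H))

end PerH

/-- For a finite abelian group `G` and a finite set `A` of size `q ≥ 2`, the group of
invertible cellular automata decomposes as
`ICA(G;A) ≅ ∏_{H ≤ G} (G/H) ≀ Sym(α_H)`. -/
theorem stmt12 (G A : Type*) [CommGroup G] [Fintype G] [Fintype A]
    (hA : 2 ≤ Fintype.card A) :
    Nonempty (ICA G A ≃* ((H : Subgroup G) → wreath (G ⧸ H) (alphaH G A H))) := by
  refine ⟨?_⟩
  exact (MulEquiv.subgroupCongr (ICA_eq_ePerm G A)).trans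
    ((decompEquiv G A).trans (MulEquiv.piCongrRight (fun H => perHEquiv H)))
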